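/- arXiv:1012.4721 — 5 statements merged into one kernel-verified Lean document; each statement's English description precedes it below -/
import Mathlib

section
/- For every polynomial f in two complex variables and every t ∈ [0,1], ∫_{|z|≤1} f(z̄(1−z̄z)^{(1−t)/2}, z(1−z̄z)^{(1+t)/2}) dz dz̄ = ∫_{|z|≤1} f(z̄, z(1−z̄z)) dz dz̄; in particular the Holstein-Primakoff-type integral (t=0) over the unit disc equals the Dyson-Maleev-type integral (t=1). -/
open MeasureTheory Complex

lemma disc_eq_closedBall : {z : ℂ | ‖z‖ ≤ 1} = Metric.closedBall (0:ℂ) 1 := by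
  ext z
  simp [Metric.mem_closedBall, Complex.dist_eq]

/-- Rotation-invariance vanishing lemma. -/
lemma rot_vanish (a b : ℕ) (hab : a ≠ b) (g : ℝ → ℂ) :
    (∫ z in Metric.closedBall (0:ℂ) 1,
      ((starRingEnd ℂ) z) ^ a * z ^ b * g (normSq z)) = 0 := by
  set F : ℂ → ℂ := fun z => ((starRingEnd ℂ) z) ^ a * z ^ b * g (normSq z) with hF
  set J := ∫ z in Metric.closedBall (0:ℂ) 1, F z with hJdef
  have hd : ((b : ℝ) - a) ≠ 0 := by
    intro h
    apply hab
    have : (a : ℝ) = b := by linarith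
    exact_mod_cast this
  set θ : ℝ := Real.pi / ((b : ℝ) - a) with hθ
  set c : Circle := Circle.exp θ with hc
  have hmp : MeasurePreserving (rotation c) volume volume :=
    (rotation c).measurePreserving
  have hemb : MeasurableEmbedding (rotation c) :=
    (rotation c).toHomeomorph.measurableEmbedding
  have himg : (rotation c) '' Metric.closedBall (0:ℂ) 1 = Metric.closedBall (0:ℂ) 1 := by
    have := (rotation c).toIsometryEquiv.image_closedBall 0 1
    simpa using this
  have key : J = ∫ z in Metric.closedBall (0:ℂ) 1, F (rotation c z) := by
    conv_lhs => rw [hJdef, ← himg]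
    exact hmp.setIntegral_image_emb hemb F _
  have hcoef : ((starRingEnd ℂ) (c : ℂ)) ^ a * (c : ℂ) ^ b = -1 := by
    have hcc : (c : ℂ) = Complex.exp (θ * Complex.I) := Circle.coe_exp θ
    have hconj : (starRingEnd ℂ) (c : ℂ) = Complex.exp (-(θ * Complex.I)) := by
      rw [hcc, ← Complex.exp_conj]
      congr 1
      simp [Complex.conj_ofReal]
    rw [hconj, hcc, ← Complex.exp_nat_mul, ← Complex.exp_nat_mul, ← Complex.exp_add]
    have : (a : ℂ) * -(↑θ * Complex.I) + (b : ℂ) * (↑θ * Complex.I)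
        = (((b : ℝ) - a) * θ : ℝ) * Complex.I := by
      push_cast
      ring
    rw [this]
    have hθval : ((b : ℝ) - a) * θ = Real.pi := by
      rw [hθ]
      field_simp
    rw [hθval, Complex.exp_pi_mul_I]
  have hrot : ∀ z : ℂ, F (rotation c z) = -F z := by
    intro z
    rw [hF]
    simp only [rotation_apply]
    have hns : normSq ((c : ℂ) * z) = normSq z := by
      rw [normSq_mul]
      simp [Circle.normSq_coe]
    rw [hns, map_mul, mul_pow, mul_pow]
    have : (starRingEnd ℂ) ↑c ^ a * (starRingEnd ℂ) z ^ a * ((c:ℂ) ^ b * z ^ b) * g (normSq z)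
        = ((starRingEnd ℂ) (c:ℂ) ^ a * (c:ℂ) ^ b) * ((starRingEnd ℂ) z ^ a * z ^ b * g (normSq z)) := by
      ring
    rw [this, hcoef]
    ring
  have h2 : J = -J := by
    conv_lhs => rw [key]
    simp only [hrot]
    rw [integral_neg]
  have : (2 : ℂ) * J = 0 := by linear_combination h2
  have h2ne : (2 : ℂ) ≠ 0 := two_ne_zero
  exact (mul_eq_zero.mp this).resolve_left h2ne

/-- Scalar compact case of Theorem 2.1 (type AIII, p = q = 1): for every
polynomial `f` in two complex variables and every `t ∈ [0,1]`,
`∫_{|z|≤1} f(z̄(1-z̄z)^{(1-t)/2}, z(1-z̄z)^{(1+t)/2}) dz dz̄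
  = ∫_{|z|≤1} f(z̄, z(1-z̄z)) dz dz̄`;
in particular the Holstein-Primakoff integral (`t = 0`) equals the
Dyson-Maleev integral (`t = 1`). -/
theorem scalar_compact_dyson_maleev (f : MvPolynomial (Fin 2) ℂ)
    (t : ℝ) (ht : t ∈ Set.Icc (0 : ℝ) 1) :
    (∫ z in {z : ℂ | ‖z‖ ≤ 1},
        MvPolynomial.eval
          ![(starRingEnd ℂ) z * (((1 - normSq z) ^ ((1 - t) / 2) : ℝ) : ℂ),
            z * (((1 - normSq z) ^ ((1 + t) / 2) : ℝ) : ℂ)] f) =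
      ∫ z in {z : ℂ | ‖z‖ ≤ 1},
        MvPolynomial.eval
          ![(starRingEnd ℂ) z, z * (1 - (normSq z : ℂ))] f := by
  obtain ⟨ht0, ht1⟩ := ht
  have hr : (0:ℝ) ≤ (1 - t) / 2 := by linarith
  have hs : (0:ℝ) ≤ (1 + t) / 2 := by linarith
  rw [disc_eq_closedBall]
  -- expand eval as a sum over the support
  have heval : ∀ (v : Fin 2 → ℂ),
      MvPolynomial.eval v f = ∑ d ∈ f.support,
        MvPolynomial.coeff d f * (v 0 ^ d 0 * v 1 ^ d 1) := by
    intro v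
    rw [MvPolynomial.eval_eq']
    refine Finset.sum_congr rfl fun d _ => ?_
    rw [Fin.prod_univ_two]
  simp only [heval]
  -- continuity facts
  have hcont1 : Continuous fun z : ℂ => (((1 - normSq z) ^ ((1 - t) / 2) : ℝ) : ℂ) := by
    apply Complex.continuous_ofReal.comp
    exact (continuous_const.sub Complex.continuous_normSq).rpow_const fun x => Or.inr hr
  have hcont2 : Continuous fun z : ℂ => (((1 - normSq z) ^ ((1 + t) / 2) : ℝ) : ℂ) := by
    apply Complex.continuous_ofReal.comp
    exact (continuous_const.sub Complex.continuous_normSq).rpow_const fun x => Or.inr hs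
  have hcontconj : Continuous fun z : ℂ => (starRingEnd ℂ) z := Complex.continuous_conj
  have hK : IsCompact (Metric.closedBall (0:ℂ) 1) := isCompact_closedBall 0 1
  have hIntL : ∀ d ∈ f.support, IntegrableOn (fun z : ℂ =>
      MvPolynomial.coeff d f *
        (((starRingEnd ℂ) z * (((1 - normSq z) ^ ((1 - t) / 2) : ℝ) : ℂ)) ^ d 0 *
          (z * (((1 - normSq z) ^ ((1 + t) / 2) : ℝ) : ℂ)) ^ d 1))
      (Metric.closedBall (0:ℂ) 1) volume := by
    intro d _
    exact (continuous_const.mul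
      (((hcontconj.mul hcont1).pow _).mul
        ((continuous_id.mul hcont2).pow _))).continuousOn.integrableOn_compact hK
  have hIntR : ∀ d ∈ f.support, IntegrableOn (fun z : ℂ =>
      MvPolynomial.coeff d f *
        (((starRingEnd ℂ) z) ^ d 0 * (z * (1 - (normSq z : ℂ))) ^ d 1))
      (Metric.closedBall (0:ℂ) 1) volume := by
    intro d _
    exact (continuous_const.mul ((hcontconj.pow _).mul
      ((continuous_id.mul (continuous_const.sub (Complex.continuous_ofReal.comp
        Complex.continuous_normSq))).pow _))).continuousOn.integrableOn_compact hK
  simp only [Matrix.cons_val_zero, Matrix.cons_val_one, Matrix.head_cons]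
  rw [integral_finset_sum _ hIntL, integral_finset_sum _ hIntR]
  refine Finset.sum_congr rfl fun d _ => ?_
  by_cases hab : d 0 = d 1
  · -- diagonal terms: integrands agree pointwise on the disc
    apply setIntegral_congr_fun measurableSet_closedBall
    intro z hz
    have hns : normSq z ≤ 1 := by
      have : ‖z‖ ≤ 1 := by simpa [Complex.dist_eq] using hz
      have h2 : normSq z = ‖z‖ ^ 2 := (Complex.sq_norm z).symm
      nlinarith [norm_nonneg z]
    have hx : (0:ℝ) ≤ 1 - normSq z := by linarith
    have hAB : (1 - normSq z) ^ ((1 - t) / 2) * (1 - normSq z) ^ ((1 + t) / 2)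
        = 1 - normSq z := by
      rw [← Real.rpow_add_of_nonneg hx hr hs]
      have h1 : (1 - t) / 2 + (1 + t) / 2 = 1 := by ring
      rw [h1, Real.rpow_one]
    have hABC : ((((1 - normSq z) ^ ((1 - t) / 2) : ℝ)) : ℂ) *
        ((((1 - normSq z) ^ ((1 + t) / 2) : ℝ)) : ℂ) = ((1 - normSq z : ℝ) : ℂ) := by
      rw [← Complex.ofReal_mul, hAB]
    have hcast : (1 : ℂ) - (normSq z : ℂ) = ((1 - normSq z : ℝ) : ℂ) := by push_cast; ring
    simp only [hcast, ← hABC, ← hab]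
    ring
  · -- off-diagonal terms: both integrals vanish by rotation invariance
    have hL : (∫ z in Metric.closedBall (0:ℂ) 1,
        ((starRingEnd ℂ) z) ^ d 0 * z ^ d 1 *
          ((((1 - normSq z) ^ ((1 - t) / 2) : ℝ) : ℂ) ^ d 0 *
            (((1 - normSq z) ^ ((1 + t) / 2) : ℝ) : ℂ) ^ d 1)) = 0 :=
      rot_vanish (d 0) (d 1) hab
        (fun y => ((((1 - y) ^ ((1 - t) / 2) : ℝ)) : ℂ) ^ d 0 *
          ((((1 - y) ^ ((1 + t) / 2) : ℝ)) : ℂ) ^ d 1)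
    have hR : (∫ z in Metric.closedBall (0:ℂ) 1,
        ((starRingEnd ℂ) z) ^ d 0 * z ^ d 1 * (1 - (normSq z : ℂ)) ^ d 1) = 0 :=
      rot_vanish (d 0) (d 1) hab (fun y => (1 - (y : ℂ)) ^ d 1)
    calc (∫ z in Metric.closedBall (0:ℂ) 1, MvPolynomial.coeff d f *
            (((starRingEnd ℂ) z * (((1 - normSq z) ^ ((1 - t) / 2) : ℝ) : ℂ)) ^ d 0 *
              (z * (((1 - normSq z) ^ ((1 + t) / 2) : ℝ) : ℂ)) ^ d 1))
        = MvPolynomial.coeff d f * ∫ z in Metric.closedBall (0:ℂ) 1,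
            ((starRingEnd ℂ) z) ^ d 0 * z ^ d 1 *
              (((((1 - normSq z) ^ ((1 - t) / 2) : ℝ)) : ℂ) ^ d 0 *
                ((((1 - normSq z) ^ ((1 + t) / 2) : ℝ)) : ℂ) ^ d 1) := by
          rw [← integral_const_mul]
          apply setIntegral_congr_fun measurableSet_closedBall
          intro z _
          simp only [mul_pow]
          ring
      _ = 0 := by rw [hL]; ring
      _ = MvPolynomial.coeff d f * ∫ z in Metric.closedBall (0:ℂ) 1,
            ((starRingEnd ℂ) z) ^ d 0 * z ^ d 1 * (1 - (normSq z : ℂ)) ^ d 1 := by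
          rw [hR]; ring
      _ = ∫ z in Metric.closedBall (0:ℂ) 1, MvPolynomial.coeff d f *
            (((starRingEnd ℂ) z) ^ d 0 * (z * (1 - (normSq z : ℂ))) ^ d 1) := by
          rw [← integral_const_mul]
          apply setIntegral_congr_fun measurableSet_closedBall
          intro z _
          simp only [mul_pow]
          ring
end

section
/- Let s = Diag(1_p, −1_q) and let g ∈ SL(p+q, ℂ) have block form g = [[A, B],[C, D]] with A and D invertible. Set Z = B D^{−1} and Z̃ = C A^{−1}. Then g s g^{−1} = [[(1+Z Z̃)(1−Z Z̃)^{−1}, −2Z(1−Z̃Z)^{−1}], [2Z̃(1−Z Z̃)^{−1}, −(1+Z̃Z)(1−Z̃Z)^{−1}]], provided 1 − Z Z̃ and 1 − Z̃ Z are invertible. -/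
open Matrix

section Aux

variable {p q r : ℕ}

private lemma auxTL (Z : Matrix (Fin p) (Fin q) ℂ) (Zt : Matrix (Fin q) (Fin p) ℂ)
    (W : Matrix (Fin p) (Fin r) ℂ) :
    (1 + Z * Zt) * W - (2 : ℂ) • (Z * (Zt * W)) = (1 - Z * Zt) * W := by
  simp only [Matrix.add_mul, Matrix.sub_mul, Matrix.one_mul, Matrix.mul_assoc, two_smul]
  abel

private lemma auxTR (Z : Matrix (Fin p) (Fin q) ℂ) (Zt : Matrix (Fin q) (Fin p) ℂ)
    (W : Matrix (Fin q) (Fin r) ℂ) :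
    (1 + Z * Zt) * (Z * W) - (2 : ℂ) • (Z * W) = -(Z * ((1 - Zt * Z) * W)) := by
  simp only [Matrix.add_mul, Matrix.sub_mul, Matrix.mul_sub, Matrix.one_mul,
    Matrix.mul_one, Matrix.mul_assoc, two_smul, neg_sub]
  abel

private lemma auxBL (Z : Matrix (Fin p) (Fin q) ℂ) (Zt : Matrix (Fin q) (Fin p) ℂ)
    (W : Matrix (Fin p) (Fin r) ℂ) :
    (2 : ℂ) • (Zt * W) - (1 + Zt * Z) * (Zt * W) = Zt * ((1 - Z * Zt) * W) := by
  simp only [Matrix.add_mul, Matrix.sub_mul, Matrix.mul_sub, Matrix.one_mul,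
    Matrix.mul_one, Matrix.mul_assoc, two_smul]
  abel

private lemma auxBR (Z : Matrix (Fin p) (Fin q) ℂ) (Zt : Matrix (Fin q) (Fin p) ℂ)
    (W : Matrix (Fin q) (Fin r) ℂ) :
    (2 : ℂ) • (Zt * (Z * W)) - (1 + Zt * Z) * W = -((1 - Zt * Z) * W) := by
  simp only [Matrix.add_mul, Matrix.sub_mul, Matrix.mul_sub, Matrix.one_mul,
    Matrix.mul_one, Matrix.mul_assoc, two_smul, neg_sub]
  abel

private lemma comm_inv {m n : ℕ} (X : Matrix (Fin m) (Fin n) ℂ) (Y : Matrix (Fin n) (Fin m) ℂ)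
    (h1 : IsUnit (1 - X * Y)) (h2 : IsUnit (1 - Y * X)) :
    (1 - Y * X)⁻¹ * Y = Y * (1 - X * Y)⁻¹ := by
  have k1 : (1 - Y * X)⁻¹ * (1 - Y * X) = 1 :=
    Matrix.nonsing_inv_mul _ ((Matrix.isUnit_iff_isUnit_det _).mp h2)
  have k2 : (1 - X * Y) * (1 - X * Y)⁻¹ = 1 :=
    Matrix.mul_nonsing_inv _ ((Matrix.isUnit_iff_isUnit_det _).mp h1)
  have h : Y * (1 - X * Y) = (1 - Y * X) * Y := by
    simp only [mul_sub, sub_mul, Matrix.mul_sub, Matrix.sub_mul, Matrix.mul_one,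
      Matrix.one_mul, Matrix.mul_assoc]
  calc (1 - Y * X)⁻¹ * Y
      = (1 - Y * X)⁻¹ * (Y * (1 - X * Y)) * (1 - X * Y)⁻¹ := by
        rw [Matrix.mul_assoc ((1 - Y * X)⁻¹), Matrix.mul_assoc, k2, Matrix.mul_one]
    _ = ((1 - Y * X)⁻¹ * (1 - Y * X)) * Y * (1 - X * Y)⁻¹ := by
        rw [h, ← Matrix.mul_assoc]
    _ = Y * (1 - X * Y)⁻¹ := by rw [k1, Matrix.one_mul]

end Aux

/-- For `g ∈ SL(p+q, ℂ)` in block form `g = [[A, B], [C, D]]` with `A`, `D`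
invertible, setting `Z = B D⁻¹`, `Z̃ = C A⁻¹` and `s = Diag(1_p, -1_q)`, one has
`g s g⁻¹ = [[(1+Z Z̃)(1-Z Z̃)⁻¹, -2Z(1-Z̃Z)⁻¹], [2Z̃(1-Z Z̃)⁻¹, -(1+Z̃Z)(1-Z̃Z)⁻¹]]`,
provided `1 - Z Z̃` and `1 - Z̃ Z` are invertible. -/
theorem gsg_inv_block_formula {p q : ℕ}
    (A : Matrix (Fin p) (Fin p) ℂ) (B : Matrix (Fin p) (Fin q) ℂ)
    (C : Matrix (Fin q) (Fin p) ℂ) (D : Matrix (Fin q) (Fin q) ℂ)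
    (hA : IsUnit A) (hD : IsUnit D)
    (hg : (fromBlocks A B C D).det = 1)
    (Z : Matrix (Fin p) (Fin q) ℂ) (Zt : Matrix (Fin q) (Fin p) ℂ)
    (hZ : Z = B * D⁻¹) (hZt : Zt = C * A⁻¹)
    (h1 : IsUnit (1 - Z * Zt)) (h2 : IsUnit (1 - Zt * Z)) :
    fromBlocks A B C D * fromBlocks (1 : Matrix (Fin p) (Fin p) ℂ) 0 0
        (-1 : Matrix (Fin q) (Fin q) ℂ) * (fromBlocks A B C D)⁻¹ =
      fromBlocks ((1 + Z * Zt) * (1 - Z * Zt)⁻¹) (-(2 : ℂ) • (Z * (1 - Zt * Z)⁻¹))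
        ((2 : ℂ) • (Zt * (1 - Z * Zt)⁻¹)) (-((1 + Zt * Z) * (1 - Zt * Z)⁻¹)) := by
  have hgu : IsUnit (fromBlocks A B C D).det := by rw [hg]; exact isUnit_one
  have hDdet : IsUnit D.det := (Matrix.isUnit_iff_isUnit_det _).mp hD
  have hAdet : IsUnit A.det := (Matrix.isUnit_iff_isUnit_det _).mp hA
  have hB : B = Z * D := by
    rw [hZ, Matrix.mul_assoc, Matrix.nonsing_inv_mul _ hDdet, Matrix.mul_one]
  have hC : C = Zt * A := by
    rw [hZt, Matrix.mul_assoc, Matrix.nonsing_inv_mul _ hAdet, Matrix.mul_one]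
  set P := (1 - Z * Zt)⁻¹ with hPdef
  set Q := (1 - Zt * Z)⁻¹ with hQdef
  have hP1 : (1 - Z * Zt) * P = 1 :=
    Matrix.mul_nonsing_inv _ ((Matrix.isUnit_iff_isUnit_det _).mp h1)
  have hQ1 : (1 - Zt * Z) * Q = 1 :=
    Matrix.mul_nonsing_inv _ ((Matrix.isUnit_iff_isUnit_det _).mp h2)
  have comm1 : Q * Zt = Zt * P := comm_inv Z Zt h1 h2
  have comm2 : P * Z = Z * Q := comm_inv Zt Z h2 h1
  suffices h : fromBlocks A B C D * fromBlocks (1 : Matrix (Fin p) (Fin p) ℂ) 0 0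
      (-1 : Matrix (Fin q) (Fin q) ℂ) =
      fromBlocks ((1 + Z * Zt) * P) (-(2 : ℂ) • (Z * Q))
        ((2 : ℂ) • (Zt * P)) (-((1 + Zt * Z) * Q)) * fromBlocks A B C D by
    rw [h, Matrix.mul_assoc, Matrix.mul_nonsing_inv _ hgu, Matrix.mul_one]
  rw [Matrix.fromBlocks_multiply, Matrix.fromBlocks_multiply]
  rw [hB, hC, Matrix.fromBlocks_inj]
  refine ⟨?_, ?_, ?_, ?_⟩
  · -- TL
    have e1 : -(2 : ℂ) • (Z * Q) * (Zt * A) = -((2 : ℂ) • (Z * (Zt * (P * A)))) := by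
      rw [neg_smul, Matrix.neg_mul, Matrix.smul_mul, Matrix.mul_assoc Z Q,
        ← Matrix.mul_assoc Q Zt A, comm1, Matrix.mul_assoc Zt P A]
    rw [Matrix.mul_one, Matrix.mul_zero, add_zero, e1, ← sub_eq_add_neg,
      Matrix.mul_assoc (1 + Z * Zt) P A, auxTL, ← Matrix.mul_assoc, hP1, Matrix.one_mul]
  · -- TR
    have e1 : (1 + Z * Zt) * P * (Z * D) = (1 + Z * Zt) * (Z * (Q * D)) := by
      rw [Matrix.mul_assoc (1 + Z * Zt) P, ← Matrix.mul_assoc P Z D, comm2,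
        Matrix.mul_assoc Z Q D]
    have e2 : -(2 : ℂ) • (Z * Q) * D = -((2 : ℂ) • (Z * (Q * D))) := by
      rw [neg_smul, Matrix.neg_mul, Matrix.smul_mul, Matrix.mul_assoc Z Q D]
    rw [Matrix.mul_zero, zero_add, Matrix.mul_neg, Matrix.mul_one, e1, e2,
      ← sub_eq_add_neg, auxTR, ← Matrix.mul_assoc (1 - Zt * Z) Q D, hQ1,
      Matrix.one_mul]
  · -- BL
    have e1 : (2 : ℂ) • (Zt * P) * A = (2 : ℂ) • (Zt * (P * A)) := by
      rw [Matrix.smul_mul, Matrix.mul_assoc Zt P A]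
    have e2 : -((1 + Zt * Z) * Q) * (Zt * A) = -((1 + Zt * Z) * (Zt * (P * A))) := by
      rw [Matrix.neg_mul, Matrix.mul_assoc (1 + Zt * Z) Q, ← Matrix.mul_assoc Q Zt A,
        comm1, Matrix.mul_assoc Zt P A]
    rw [Matrix.mul_one, Matrix.mul_zero, add_zero, e1, e2, ← sub_eq_add_neg, auxBL,
      ← Matrix.mul_assoc (1 - Z * Zt) P A, hP1, Matrix.one_mul]
  · -- BR
    have e1 : (2 : ℂ) • (Zt * P) * (Z * D) = (2 : ℂ) • (Zt * (Z * (Q * D))) := by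
      rw [Matrix.smul_mul, Matrix.mul_assoc Zt P, ← Matrix.mul_assoc P Z D, comm2,
        Matrix.mul_assoc Z Q D]
    have e2 : -((1 + Zt * Z) * Q) * D = -((1 + Zt * Z) * (Q * D)) := by
      rw [Matrix.neg_mul, Matrix.mul_assoc (1 + Zt * Z) Q D]
    rw [Matrix.mul_zero, zero_add, Matrix.mul_neg, Matrix.mul_one, e1, e2,
      ← sub_eq_add_neg, auxBR, ← Matrix.mul_assoc (1 - Zt * Z) Q D, hQ1, Matrix.one_mul]
end

section
/- Let b be a p×q complex matrix and b̃ a q×p complex matrix, and suppose 1 + b̃b (equivalently 1 + b b̃) has no eigenvalues on the nonpositive real axis so that its holomorphic square root is defined. Set Z = −b(1+b̃b)^{−1/2} and Z̃ = −b̃(1+b b̃)^{−1/2}. Then (1+Z Z̃)(1−Z Z̃)^{−1} = 1 + 2b b̃, −2Z(1−Z̃Z)^{−1} = 2b(1+b̃b)^{1/2}, 2Z̃(1−Z Z̃)^{−1} = −2b̃(1+b b̃)^{1/2}, and −(1+Z̃Z)(1−Z̃Z)^{−1} = −1 − 2b̃b. -/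
open Matrix
open Polynomial

lemma matrix_mem_spectrum_iff {n : Type*} [Fintype n] [DecidableEq n] (A : Matrix n n ℂ) (x : ℂ) :
    x ∈ spectrum ℂ A ↔ A.charpoly.IsRoot x := by
  have key : A.charpoly.eval x = (algebraMap ℂ (Matrix n n ℂ) x - A).det := by
    rw [Matrix.charpoly, _root_.eval_det, matPolyEquiv_charmatrix]
    congr 1
    simp only [eval_sub, eval_X, eval_C, Matrix.scalar_apply, Matrix.algebraMap_eq_diagonal]
    rfl
  rw [spectrum.mem_iff, Matrix.isUnit_iff_isUnit_det, isUnit_iff_ne_zero, not_ne_iff,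
    Polynomial.IsRoot, key]

lemma matrix_isUnit_of_spectrum {n : Type*} [Fintype n] [DecidableEq n] (A : Matrix n n ℂ)
    (h : ∀ x ∈ spectrum ℂ A, 0 < x.re) : IsUnit A := by
  by_contra hA
  exact absurd (h 0 ((spectrum.zero_mem_iff ℂ).mpr hA)) (by simp)

lemma intertwine_sqrt {p q : ℕ} (b : Matrix (Fin p) (Fin q) ℂ) (bt : Matrix (Fin q) (Fin p) ℂ)
    (s₁ : Matrix (Fin q) (Fin q) ℂ) (s₂ : Matrix (Fin p) (Fin p) ℂ)
    (hs₁ : s₁ * s₁ = 1 + bt * b) (hs₁spec : ∀ x ∈ spectrum ℂ s₁, 0 < x.re)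
    (hs₂ : s₂ * s₂ = 1 + b * bt) (hs₂spec : ∀ x ∈ spectrum ℂ s₂, 0 < x.re) :
    b * s₁ = s₂ * b := by
  rcases Nat.eq_zero_or_pos p with hp | hp
  · subst hp; ext i j; exact i.elim0
  set D := b * s₁ - s₂ * b with hD
  have e1 : b * (s₁ * s₁) = s₂ * (s₂ * b) := by
    rw [hs₁, ← Matrix.mul_assoc, hs₂, Matrix.mul_add, Matrix.add_mul, Matrix.mul_one,
      Matrix.one_mul, Matrix.mul_assoc]
  have keysum : s₂ * D + D * s₁ = 0 := by
    rw [hD]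
    simp only [Matrix.mul_sub, Matrix.sub_mul, Matrix.mul_assoc]
    rw [e1]
    abel
  have key : s₂ * D = D * (-s₁) := by
    rw [Matrix.mul_neg]
    exact eq_neg_of_add_eq_zero_left keysum
  have hpow : ∀ k : ℕ, s₂ ^ k * D = D * (-s₁) ^ k := by
    intro k
    induction k with
    | zero => simp
    | succ k ih =>
        rw [pow_succ', Matrix.mul_assoc, ih, ← Matrix.mul_assoc, key, Matrix.mul_assoc,
          ← pow_succ']
  have hpoly : ∀ P : ℂ[X], (aeval s₂ P) * D = D * aeval (-s₁) P := by
    intro P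
    induction P using Polynomial.induction_on' with
    | add f g hf hg => simp only [map_add, Matrix.add_mul, Matrix.mul_add, hf, hg]
    | monomial n a =>
        simp only [aeval_monomial, ← Algebra.smul_def, Matrix.smul_mul, Matrix.mul_smul, hpow n]
  have hdeg : 0 < (s₂.charpoly).degree := by
    rw [Matrix.charpoly_degree_eq_dim, Fintype.card_fin]
    exact_mod_cast hp
  have hU : IsUnit (aeval (-s₁) s₂.charpoly) := by
    by_contra h
    have h0m : (0 : ℂ) ∈ spectrum ℂ (aeval (-s₁) s₂.charpoly) := (spectrum.zero_mem_iff ℂ).mpr h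
    rw [spectrum.map_polynomial_aeval_of_degree_pos (-s₁) _ hdeg] at h0m
    obtain ⟨x, hx, hx0⟩ := h0m
    have hxs₂ : x ∈ spectrum ℂ s₂ := (matrix_mem_spectrum_iff s₂ x).mpr hx0
    have h2 := hs₂spec x hxs₂
    rw [← spectrum.neg_eq] at hx
    have h1 := hs₁spec _ (Set.mem_neg.mp hx)
    simp only [Complex.neg_re] at h1
    linarith
  have h0 : D * aeval (-s₁) s₂.charpoly = 0 := by
    rw [← hpoly, Matrix.aeval_self_charpoly, Matrix.zero_mul]
  have hdet : IsUnit (aeval (-s₁) s₂.charpoly).det := (Matrix.isUnit_iff_isUnit_det _).mp hU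
  have hD0 : D = 0 := by
    have hDe : D = (D * aeval (-s₁) s₂.charpoly) * (aeval (-s₁) s₂.charpoly)⁻¹ := by
      rw [Matrix.mul_assoc, Matrix.mul_nonsing_inv _ hdet, Matrix.mul_one]
    rw [h0, Matrix.zero_mul] at hDe
    exact hDe
  exact sub_eq_zero.mp hD0

/-- Algebraic simplification `Q ∘ R` (equation (7) of the paper).
Here `b` is `p × q`, `b̃` is `q × p`, the spectra of `b̃b` and `b b̃` avoid
`(-∞, -1]`, and `s₁`, `s₂` are the principal square roots of `1 + b̃b` and
`1 + b b̃` (characterized as the square roots whose spectra lie in the open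
right half-plane).  With `Z = -b s₁⁻¹` and `Z̃ = -b̃ s₂⁻¹` one has
`(1+Z Z̃)(1-Z Z̃)⁻¹ = 1 + 2 b b̃`, `-2Z(1-Z̃Z)⁻¹ = 2 b (1+b̃b)^{1/2}`,
`2Z̃(1-Z Z̃)⁻¹ = -2 b̃ (1+b b̃)^{1/2}`, `-(1+Z̃Z)(1-Z̃Z)⁻¹ = -1 - 2 b̃b`. -/
theorem QR_dyson_maleev_formula {p q : ℕ}
    (b : Matrix (Fin p) (Fin q) ℂ) (bt : Matrix (Fin q) (Fin p) ℂ)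
    (hspec₁ : ∀ x ∈ spectrum ℂ (bt * b), ¬(x.im = 0 ∧ x.re ≤ -1))
    (hspec₂ : ∀ x ∈ spectrum ℂ (b * bt), ¬(x.im = 0 ∧ x.re ≤ -1))
    (s₁ : Matrix (Fin q) (Fin q) ℂ) (s₂ : Matrix (Fin p) (Fin p) ℂ)
    (hs₁ : s₁ * s₁ = 1 + bt * b) (hs₁spec : ∀ x ∈ spectrum ℂ s₁, 0 < x.re)
    (hs₂ : s₂ * s₂ = 1 + b * bt) (hs₂spec : ∀ x ∈ spectrum ℂ s₂, 0 < x.re)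
    (Z : Matrix (Fin p) (Fin q) ℂ) (Zt : Matrix (Fin q) (Fin p) ℂ)
    (hZ : Z = -(b * s₁⁻¹)) (hZt : Zt = -(bt * s₂⁻¹)) :
    (1 + Z * Zt) * (1 - Z * Zt)⁻¹ = 1 + (2 : ℂ) • (b * bt) ∧
    -((2 : ℂ) • (Z * (1 - Zt * Z)⁻¹)) = (2 : ℂ) • (b * s₁) ∧
    (2 : ℂ) • (Zt * (1 - Z * Zt)⁻¹) = -((2 : ℂ) • (bt * s₂)) ∧
    -((1 + Zt * Z) * (1 - Zt * Z)⁻¹) = -1 - (2 : ℂ) • (bt * b) := by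
  have h12 : b * s₁ = s₂ * b := intertwine_sqrt b bt s₁ s₂ hs₁ hs₁spec hs₂ hs₂spec
  have h21 : bt * s₂ = s₁ * bt := intertwine_sqrt bt b s₂ s₁ hs₂ hs₂spec hs₁ hs₁spec
  have hu₁ : IsUnit s₁.det := (Matrix.isUnit_iff_isUnit_det s₁).mp
    (matrix_isUnit_of_spectrum s₁ hs₁spec)
  have hu₂ : IsUnit s₂.det := (Matrix.isUnit_iff_isUnit_det s₂).mp
    (matrix_isUnit_of_spectrum s₂ hs₂spec)
  have e₁ : s₁⁻¹ * s₁ = 1 := Matrix.nonsing_inv_mul s₁ hu₁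
  have e₁' : s₁ * s₁⁻¹ = 1 := Matrix.mul_nonsing_inv s₁ hu₁
  have e₂ : s₂⁻¹ * s₂ = 1 := Matrix.nonsing_inv_mul s₂ hu₂
  have e₂' : s₂ * s₂⁻¹ = 1 := Matrix.mul_nonsing_inv s₂ hu₂
  -- intertwining with inverses
  have hb : b * s₁⁻¹ = s₂⁻¹ * b := by
    calc b * s₁⁻¹ = s₂⁻¹ * (s₂ * (b * s₁⁻¹)) := by
          rw [← Matrix.mul_assoc, e₂, Matrix.one_mul]
      _ = s₂⁻¹ * ((b * s₁) * s₁⁻¹) := by rw [← Matrix.mul_assoc s₂ b s₁⁻¹, ← h12]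
      _ = s₂⁻¹ * b := by rw [Matrix.mul_assoc b s₁ s₁⁻¹, e₁', Matrix.mul_one]
  have hbt : bt * s₂⁻¹ = s₁⁻¹ * bt := by
    calc bt * s₂⁻¹ = s₁⁻¹ * (s₁ * (bt * s₂⁻¹)) := by
          rw [← Matrix.mul_assoc, e₁, Matrix.one_mul]
      _ = s₁⁻¹ * ((bt * s₂) * s₂⁻¹) := by rw [← Matrix.mul_assoc s₁ bt s₂⁻¹, ← h21]
      _ = s₁⁻¹ * bt := by rw [Matrix.mul_assoc bt s₂ s₂⁻¹, e₂', Matrix.mul_one]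
  have hbbt : b * bt = s₂ * s₂ - 1 := by rw [hs₂]; abel
  have hbtb : bt * b = s₁ * s₁ - 1 := by rw [hs₁]; abel
  -- Z Zt and Zt Z
  have hZZt : Z * Zt = 1 - s₂⁻¹ * s₂⁻¹ := by
    rw [hZ, hZt, Matrix.neg_mul, Matrix.mul_neg, neg_neg, hb]
    calc (s₂⁻¹ * b) * (bt * s₂⁻¹) = s₂⁻¹ * ((b * bt) * s₂⁻¹) := by
          rw [Matrix.mul_assoc, Matrix.mul_assoc]
      _ = s₂⁻¹ * (s₂ * (s₂ * s₂⁻¹)) - s₂⁻¹ * s₂⁻¹ := by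
          rw [hbbt, Matrix.sub_mul, Matrix.one_mul, Matrix.mul_sub, Matrix.mul_assoc]
      _ = 1 - s₂⁻¹ * s₂⁻¹ := by rw [e₂', Matrix.mul_one, e₂]
  have hZtZ : Zt * Z = 1 - s₁⁻¹ * s₁⁻¹ := by
    rw [hZt, hZ, Matrix.neg_mul, Matrix.mul_neg, neg_neg, hbt]
    calc (s₁⁻¹ * bt) * (b * s₁⁻¹) = s₁⁻¹ * ((bt * b) * s₁⁻¹) := by
          rw [Matrix.mul_assoc, Matrix.mul_assoc]
      _ = s₁⁻¹ * (s₁ * (s₁ * s₁⁻¹)) - s₁⁻¹ * s₁⁻¹ := by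
          rw [hbtb, Matrix.sub_mul, Matrix.one_mul, Matrix.mul_sub, Matrix.mul_assoc]
      _ = 1 - s₁⁻¹ * s₁⁻¹ := by rw [e₁', Matrix.mul_one, e₁]
  have hu₂₂ : IsUnit (s₂ * s₂).det := by rw [Matrix.det_mul]; exact hu₂.mul hu₂
  have hu₁₁ : IsUnit (s₁ * s₁).det := by rw [Matrix.det_mul]; exact hu₁.mul hu₁
  have hinv₂ : (1 - Z * Zt)⁻¹ = s₂ * s₂ := by
    rw [hZZt, sub_sub_cancel, ← Matrix.mul_inv_rev]
    exact Matrix.nonsing_inv_nonsing_inv _ hu₂₂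
  have hinv₁ : (1 - Zt * Z)⁻¹ = s₁ * s₁ := by
    rw [hZtZ, sub_sub_cancel, ← Matrix.mul_inv_rev]
    exact Matrix.nonsing_inv_nonsing_inv _ hu₁₁
  have cancel₂ : (s₂⁻¹ * s₂⁻¹) * (s₂ * s₂) = 1 := by
    rw [Matrix.mul_assoc, ← Matrix.mul_assoc s₂⁻¹ s₂ s₂, e₂, Matrix.one_mul, e₂]
  have cancel₁ : (s₁⁻¹ * s₁⁻¹) * (s₁ * s₁) = 1 := by
    rw [Matrix.mul_assoc, ← Matrix.mul_assoc s₁⁻¹ s₁ s₁, e₁, Matrix.one_mul, e₁]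
  refine ⟨?_, ?_, ?_, ?_⟩
  · rw [hinv₂, hZZt]
    have expand : (1 + (1 - s₂⁻¹ * s₂⁻¹)) * (s₂ * s₂)
        = s₂ * s₂ + (s₂ * s₂ - (s₂⁻¹ * s₂⁻¹) * (s₂ * s₂)) := by noncomm_ring
    rw [expand, cancel₂, hs₂, two_smul]
    abel
  · rw [hinv₁, hZ]
    have : (b * s₁⁻¹) * (s₁ * s₁) = b * s₁ := by
      rw [Matrix.mul_assoc, ← Matrix.mul_assoc s₁⁻¹ s₁ s₁, e₁, Matrix.one_mul]
    rw [Matrix.neg_mul, this, smul_neg, neg_neg]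
  · rw [hinv₂, hZt]
    have : (bt * s₂⁻¹) * (s₂ * s₂) = bt * s₂ := by
      rw [Matrix.mul_assoc, ← Matrix.mul_assoc s₂⁻¹ s₂ s₂, e₂, Matrix.one_mul]
    rw [Matrix.neg_mul, this, smul_neg]
  · rw [hinv₁, hZtZ]
    have expand : (1 + (1 - s₁⁻¹ * s₁⁻¹)) * (s₁ * s₁)
        = s₁ * s₁ + (s₁ * s₁ - (s₁⁻¹ * s₁⁻¹) * (s₁ * s₁)) := by noncomm_ring
    rw [expand, cancel₁, hs₁, two_smul]
    abel
end

section
/- For matrices Z (p×q) and Z̃ (q×p) with 1 − Z̃Z invertible, the 2-form Tr((1−Z Z̃)^{−1} dZ ∧ (1−Z̃Z)^{−1} dZ̃) is exact and equals d Tr(Z (1−Z̃Z)^{−1} dZ̃). -/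
open Matrix

attribute [local instance] Matrix.normedAddCommGroup Matrix.normedSpace

set_option synthInstance.maxHeartbeats 1000000
set_option maxHeartbeats 1000000

namespace InvariantTwoFormAux

/-- Type synonym for square matrices carrying the `L∞`-operator norm,
which makes them a complete normed ring. -/
def L (q : ℕ) : Type := Matrix (Fin q) (Fin q) ℂ

noncomputable instance (q : ℕ) : NormedRing (L q) := Matrix.linftyOpNormedRing
noncomputable instance (q : ℕ) : NormedAlgebra ℂ (L q) := Matrix.linftyOpNormedAlgebra
instance (q : ℕ) : FiniteDimensional ℂ (L q) :=
  (inferInstance : FiniteDimensional ℂ (Matrix (Fin q) (Fin q) ℂ))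
instance (q : ℕ) : CompleteSpace (L q) := FiniteDimensional.complete ℂ (L q)

/-- The identity as a continuous linear equivalence between the two normed structures. -/
noncomputable def eqv (q : ℕ) : Matrix (Fin q) (Fin q) ℂ ≃L[ℂ] L q :=
  LinearEquiv.toContinuousLinearEquiv
    { toFun := id, invFun := id, map_add' := fun _ _ => rfl, map_smul' := fun _ _ => rfl,
      left_inv := fun _ => rfl, right_inv := fun _ => rfl }

/-- Matrix multiplication as a continuous bilinear map (sup norm instances). -/
noncomputable def mulCLM (a b c : ℕ) :
    Matrix (Fin a) (Fin b) ℂ →L[ℂ] Matrix (Fin b) (Fin c) ℂ →L[ℂ] Matrix (Fin a) (Fin c) ℂ :=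
  LinearMap.toContinuousLinearMap
    ((LinearMap.toContinuousLinearMap :
        (Matrix (Fin b) (Fin c) ℂ →ₗ[ℂ] Matrix (Fin a) (Fin c) ℂ) ≃ₗ[ℂ] _).toLinearMap ∘ₗ
      LinearMap.mk₂ ℂ (· * ·) Matrix.add_mul
        (fun t A B => Matrix.smul_mul t A B) Matrix.mul_add (fun t A B => Matrix.mul_smul A t B))

@[simp] lemma mulCLM_apply {a b c : ℕ} (A : Matrix (Fin a) (Fin b) ℂ)
    (B : Matrix (Fin b) (Fin c) ℂ) : mulCLM a b c A B = A * B := rfl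

/-- Trace as a continuous linear map. -/
noncomputable def traceCLM (n : ℕ) : Matrix (Fin n) (Fin n) ℂ →L[ℂ] ℂ :=
  LinearMap.toContinuousLinearMap (Matrix.traceLinearMap (Fin n) ℂ ℂ)

@[simp] lemma traceCLM_apply {n : ℕ} (A : Matrix (Fin n) (Fin n) ℂ) :
    traceCLM n A = A.trace := rfl

/-- The derivative of matrix inversion at `A`. -/
noncomputable def invD {q : ℕ} (A : Matrix (Fin q) (Fin q) ℂ) :
    Matrix (Fin q) (Fin q) ℂ →L[ℂ] Matrix (Fin q) (Fin q) ℂ :=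
  -((mulCLM q q q A⁻¹).comp ((mulCLM q q q).flip A⁻¹))

@[simp] lemma invD_apply {q : ℕ} (A v : Matrix (Fin q) (Fin q) ℂ) :
    invD A v = -(A⁻¹ * (v * A⁻¹)) := rfl

lemma hasFDerivAt_inv {q : ℕ} {A : Matrix (Fin q) (Fin q) ℂ} (h : IsUnit A) :
    HasFDerivAt (fun B : Matrix (Fin q) (Fin q) ℂ => B⁻¹) (invD A) A := by
  obtain ⟨u, rfl⟩ := h
  let u' : (L q)ˣ := ⟨u.val, u.inv, u.val_inv, u.inv_val⟩
  have hinv := hasFDerivAt_ringInverse (𝕜 := ℂ) u'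
  have heq : HasFDerivAt (eqv q) ((eqv q).toContinuousLinearMap) (u : Matrix (Fin q) (Fin q) ℂ) :=
    ((eqv q).toContinuousLinearMap).hasFDerivAt
  have h1 : HasFDerivAt (fun B : Matrix (Fin q) (Fin q) ℂ => Ring.inverse ((eqv q) B))
      ((-ContinuousLinearMap.mulLeftRight ℂ (L q) ↑u'⁻¹ ↑u'⁻¹).comp
        (eqv q).toContinuousLinearMap) (u : Matrix (Fin q) (Fin q) ℂ) :=
    by have hc := HasFDerivAt.comp (u : Matrix (Fin q) (Fin q) ℂ) hinv heq; exact hc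
  have h2 : HasFDerivAt
      (fun B : Matrix (Fin q) (Fin q) ℂ => (eqv q).symm (Ring.inverse ((eqv q) B)))
      (((eqv q).symm.toContinuousLinearMap).comp
        ((-ContinuousLinearMap.mulLeftRight ℂ (L q) ↑u'⁻¹ ↑u'⁻¹).comp
          (eqv q).toContinuousLinearMap)) (u : Matrix (Fin q) (Fin q) ℂ) :=
    by have hc := HasFDerivAt.comp (u : Matrix (Fin q) (Fin q) ℂ) ((eqv q).symm.toContinuousLinearMap).hasFDerivAt h1; exact hc
  have hfun : (fun B : Matrix (Fin q) (Fin q) ℂ => (eqv q).symm (Ring.inverse ((eqv q) B)))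
      = fun B : Matrix (Fin q) (Fin q) ℂ => B⁻¹ := by
    funext B
    show (Ring.inverse (B : L q) : Matrix (Fin q) (Fin q) ℂ) = B⁻¹
    exact (Matrix.nonsing_inv_eq_ringInverse B).symm
  have hder : (((eqv q).symm.toContinuousLinearMap).comp
        ((-ContinuousLinearMap.mulLeftRight ℂ (L q) ↑u'⁻¹ ↑u'⁻¹).comp
          (eqv q).toContinuousLinearMap)) = invD (u : Matrix (Fin q) (Fin q) ℂ) := by
    refine ContinuousLinearMap.ext fun v => ?_
    show -(((u⁻¹ : (Matrix (Fin q) (Fin q) ℂ)ˣ) : Matrix (Fin q) (Fin q) ℂ) * v *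
        ((u⁻¹ : (Matrix (Fin q) (Fin q) ℂ)ˣ) : Matrix (Fin q) (Fin q) ℂ))
      = -(((u : Matrix (Fin q) (Fin q) ℂ))⁻¹ * (v * ((u : Matrix (Fin q) (Fin q) ℂ))⁻¹))
    rw [Matrix.coe_units_inv, mul_assoc]
  rw [hfun, hder] at h2
  exact h2


lemma fderiv_eval {p q : ℕ} (x : Matrix (Fin p) (Fin q) ℂ × Matrix (Fin q) (Fin p) ℂ)
    (hx : IsUnit (1 - x.2 * x.1)) (C : Matrix (Fin q) (Fin p) ℂ)
    (v : Matrix (Fin p) (Fin q) ℂ × Matrix (Fin q) (Fin p) ℂ) :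
    (fderiv ℂ (fun y : Matrix (Fin p) (Fin q) ℂ × Matrix (Fin q) (Fin p) ℂ =>
        (y.1 * (1 - y.2 * y.1)⁻¹ * C).trace) x) v
      = (v.1 * ((1 - x.2*x.1)⁻¹ * C)).trace
        + (x.1 * ((1 - x.2*x.1)⁻¹ * ((v.2*x.1 + x.2*v.1) * ((1 - x.2*x.1)⁻¹ * C)))).trace := by
  have h0 := by exact (mulCLM q p q).hasFDerivAt_of_bilinear (hasFDerivAt_snd (𝕜 := ℂ) (p := x)) (hasFDerivAt_fst (𝕜 := ℂ) (p := x))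
  have h1 := h0.const_sub (1 : Matrix (Fin q) (Fin q) ℂ)
  have h2 := (hasFDerivAt_inv hx).comp x h1
  have h3 := by exact (mulCLM p q q).hasFDerivAt_of_bilinear (hasFDerivAt_fst (𝕜 := ℂ) (p := x)) h2
  have h4 := ((traceCLM p).comp ((mulCLM p q p).flip C)).hasFDerivAt.comp x h3
  have h5 : HasFDerivAt (fun y : Matrix (Fin p) (Fin q) ℂ × Matrix (Fin q) (Fin p) ℂ =>
      (y.1 * (1 - y.2 * y.1)⁻¹ * C).trace) _ x := h4
  rw [h5.fderiv]
  simp only [ContinuousLinearMap.add_apply, ContinuousLinearMap.coe_comp',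
    Function.comp_apply, ContinuousLinearMap.flip_apply, ContinuousLinearMap.neg_apply,
    ContinuousLinearMap.coe_fst', ContinuousLinearMap.coe_snd', mulCLM_apply,
    traceCLM_apply, invD_apply]
  show ((x.1 * -((1 - x.2*x.1)⁻¹ * (-(x.2*v.1 + v.2*x.1) * (1 - x.2*x.1)⁻¹)) + v.1 * (1 - x.2*x.1)⁻¹) * C).trace = _
  simp only [Matrix.neg_mul, Matrix.mul_neg, neg_neg, Matrix.add_mul, Matrix.mul_add,
    Matrix.trace_add, Matrix.mul_assoc]
  ring

lemma key_inv {p q : ℕ} (x : Matrix (Fin p) (Fin q) ℂ × Matrix (Fin q) (Fin p) ℂ)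
    (hx : IsUnit (1 - x.2 * x.1)) :
    (1 - x.1 * x.2)⁻¹ = 1 + x.1 * ((1 - x.2 * x.1)⁻¹ * x.2) := by
  have h1 : (1 - x.2 * x.1) * (1 - x.2 * x.1)⁻¹ = 1 :=
    Matrix.mul_nonsing_inv _ ((Matrix.isUnit_iff_isUnit_det _).mp hx)
  refine Matrix.inv_eq_right_inv ?_
  have factor : x.1 * ((1 - x.2 * x.1) * ((1 - x.2 * x.1)⁻¹ * x.2))
      = x.1 * ((1 - x.2 * x.1)⁻¹ * x.2)
        - x.1 * (x.2 * (x.1 * ((1 - x.2 * x.1)⁻¹ * x.2))) := by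
    rw [Matrix.sub_mul, Matrix.one_mul, Matrix.mul_sub]
    simp only [Matrix.mul_assoc]
  calc (1 - x.1 * x.2) * (1 + x.1 * ((1 - x.2 * x.1)⁻¹ * x.2))
      = 1 + (x.1 * ((1 - x.2 * x.1)⁻¹ * x.2)
          - x.1 * (x.2 * (x.1 * ((1 - x.2 * x.1)⁻¹ * x.2)))) - x.1 * x.2 := by
        simp only [Matrix.sub_mul, Matrix.mul_add, Matrix.add_mul, Matrix.one_mul,
          Matrix.mul_one, Matrix.mul_assoc]
        abel
    _ = 1 + x.1 * ((1 - x.2 * x.1) * ((1 - x.2 * x.1)⁻¹ * x.2)) - x.1 * x.2 := by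
        rw [factor]
    _ = 1 := by
        rw [← Matrix.mul_assoc (1 - x.2 * x.1) _ x.2, h1, Matrix.one_mul]
        abel

end InvariantTwoFormAux

open InvariantTwoFormAux in
private theorem invariant_two_form_exact' {p q : ℕ}
    (x : Matrix (Fin p) (Fin q) ℂ × Matrix (Fin q) (Fin p) ℂ)
    (hx : IsUnit (1 - x.2 * x.1))
    (v w : Matrix (Fin p) (Fin q) ℂ × Matrix (Fin q) (Fin p) ℂ) :
    (fderiv ℂ (fun y : Matrix (Fin p) (Fin q) ℂ × Matrix (Fin q) (Fin p) ℂ =>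
          (y.1 * (1 - y.2 * y.1)⁻¹ * w.2).trace) x) v -
      (fderiv ℂ (fun y : Matrix (Fin p) (Fin q) ℂ × Matrix (Fin q) (Fin p) ℂ =>
          (y.1 * (1 - y.2 * y.1)⁻¹ * v.2).trace) x) w =
    ((1 - x.1 * x.2)⁻¹ * v.1 * (1 - x.2 * x.1)⁻¹ * w.2).trace -
      ((1 - x.1 * x.2)⁻¹ * w.1 * (1 - x.2 * x.1)⁻¹ * v.2).trace := by
  rw [fderiv_eval x hx w.2 v, fderiv_eval x hx v.2 w, key_inv x hx]
  have hcyc := Matrix.trace_mul_comm (x.1 * ((1 - x.2 * x.1)⁻¹ * v.2))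
    (x.1 * ((1 - x.2 * x.1)⁻¹ * w.2))
  simp only [Matrix.mul_add, Matrix.add_mul, Matrix.one_mul, Matrix.trace_add,
    Matrix.mul_assoc] at hcyc ⊢
  linear_combination hcyc


/-- Exactness of the invariant two-form (holomorphic coordinates `(Z, Z̃)` on an
open subset of `Hom(ℂ^q,ℂ^p) × Hom(ℂ^p,ℂ^q)` where `1 - Z̃Z` is invertible):
`d Tr(Z (1-Z̃Z)⁻¹ dZ̃) = Tr((1-Z Z̃)⁻¹ dZ ∧ (1-Z̃Z)⁻¹ dZ̃)`,
stated pointwise: the exterior derivative of the 1-form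
`α_x(v) = Tr(Z (1-Z̃Z)⁻¹ ṽ)`, evaluated on a pair of tangent vectors `(v, w)` as
`D_v(α_·(w)) - D_w(α_·(v))`, equals the right-hand 2-form evaluated on `(v, w)`. -/
theorem invariant_two_form_exact {p q : ℕ}
    (x : Matrix (Fin p) (Fin q) ℂ × Matrix (Fin q) (Fin p) ℂ)
    (hx : IsUnit (1 - x.2 * x.1))
    (v w : Matrix (Fin p) (Fin q) ℂ × Matrix (Fin q) (Fin p) ℂ) :
    (fderiv ℂ (fun y : Matrix (Fin p) (Fin q) ℂ × Matrix (Fin q) (Fin p) ℂ =>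
          (y.1 * (1 - y.2 * y.1)⁻¹ * w.2).trace) x) v -
      (fderiv ℂ (fun y : Matrix (Fin p) (Fin q) ℂ × Matrix (Fin q) (Fin p) ℂ =>
          (y.1 * (1 - y.2 * y.1)⁻¹ * v.2).trace) x) w =
    ((1 - x.1 * x.2)⁻¹ * v.1 * (1 - x.2 * x.1)⁻¹ * w.2).trace -
      ((1 - x.1 * x.2)⁻¹ * w.1 * (1 - x.2 * x.1)⁻¹ * v.2).trace := by
  exact invariant_two_form_exact' x hx v w
end

section
/- Under the substitution Z = −b(1+b̃b)^{−1/2}, Z̃ = −b̃(1+b b̃)^{−1/2}, the pullback of the 2-form Tr((1−Z Z̃)^{−1} dZ ∧ (1−Z̃Z)^{−1} dZ̃) equals the flat 2-form Tr(db ∧ db̃). -/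
open Matrix Filter Polynomial

attribute [local instance] Matrix.normedAddCommGroup Matrix.normedSpace

/-! ### Sylvester-type uniqueness -/

lemma isUnit_list_prod' {M : Type*} [Monoid M] {l : List M} (h : ∀ a ∈ l, IsUnit a) :
    IsUnit l.prod := by
  induction l with
  | nil => simp
  | cons a t ih =>
    rw [List.prod_cons]
    exact (h a (by simp)).mul (ih fun b hb => h b (by simp [hb]))

lemma root_charpoly_mem_spectrum' {q : ℕ} {N : Matrix (Fin q) (Fin q) ℂ} {r : ℂ}
    (hr : r ∈ N.charpoly.roots) : r ∈ spectrum ℂ N := by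
  have h0 : N.charpoly.eval r = 0 := (Polynomial.mem_roots (Matrix.charpoly_monic N).ne_zero).1 hr
  rw [spectrum.mem_iff, Matrix.isUnit_iff_isUnit_det, isUnit_iff_ne_zero, ne_eq, not_not]
  have : (algebraMap ℂ (Matrix (Fin q) (Fin q) ℂ) r - N).det = N.charpoly.eval r := by
    rw [Matrix.charpoly, ← Polynomial.coe_evalRingHom, RingHom.map_det]
    congr 1
    ext i j
    by_cases hij : i = j
    · subst hij
      simp [Matrix.charmatrix_apply_eq, Matrix.algebraMap_matrix_apply]
    · simp [Matrix.charmatrix_apply_ne _ _ _ hij, Matrix.algebraMap_matrix_apply, hij]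
  rw [this]; exact h0

lemma isUnit_aeval_charpoly_of_disjoint {p q : ℕ} (M : Matrix (Fin p) (Fin p) ℂ)
    (N : Matrix (Fin q) (Fin q) ℂ)
    (hdisj : ∀ z ∈ spectrum ℂ N, z ∉ spectrum ℂ M) :
    IsUnit (aeval M N.charpoly) := by
  have hsp := (Matrix.charpoly_monic N)
  have hsplit : N.charpoly = (N.charpoly.roots.map fun a => X - C a).prod :=
    (IsAlgClosed.splits _).eq_prod_roots_of_monic hsp
  rw [hsplit, ← Multiset.prod_toList, map_list_prod (aeval M)]
  apply isUnit_list_prod'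
  intro B hB
  rw [List.mem_map] at hB
  obtain ⟨P, hP, rfl⟩ := hB
  rw [Multiset.mem_toList, Multiset.mem_map] at hP
  obtain ⟨r, hr, rfl⟩ := hP
  have hrs : r ∈ spectrum ℂ N := root_charpoly_mem_spectrum' hr
  have hM : IsUnit (algebraMap ℂ (Matrix (Fin p) (Fin p) ℂ) r - M) := by
    by_contra hc
    exact hdisj r hrs (spectrum.mem_iff.2 hc)
  simp only [map_sub, aeval_X, aeval_C]
  have := hM.neg
  simpa [neg_sub] using this

lemma pow_comm_of_comm {p q : ℕ} {M : Matrix (Fin p) (Fin p) ℂ} {N : Matrix (Fin q) (Fin q) ℂ}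
    {X : Matrix (Fin p) (Fin q) ℂ} (h : M * X = X * N) (n : ℕ) : M ^ n * X = X * N ^ n := by
  induction n with
  | zero => simp
  | succ n ih =>
    rw [pow_succ, pow_succ, Matrix.mul_assoc, h, ← Matrix.mul_assoc, ih, Matrix.mul_assoc]

lemma aeval_comm_of_comm {p q : ℕ} {M : Matrix (Fin p) (Fin p) ℂ} {N : Matrix (Fin q) (Fin q) ℂ}
    {X : Matrix (Fin p) (Fin q) ℂ} (h : M * X = X * N) (P : ℂ[X]) :
    aeval M P * X = X * aeval N P := by
  induction P using Polynomial.induction_on' with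
  | add f g hf hg => rw [map_add, map_add, Matrix.add_mul, Matrix.mul_add, hf, hg]
  | monomial n a =>
    rw [aeval_monomial, aeval_monomial]
    rw [Matrix.mul_assoc, pow_comm_of_comm h n, ← Matrix.mul_assoc, ← Matrix.mul_assoc]
    congr 1
    rw [Algebra.algebraMap_eq_smul_one, Algebra.algebraMap_eq_smul_one,
      Matrix.smul_mul, Matrix.one_mul, Matrix.mul_smul, Matrix.mul_one]

lemma sylvester_eq_zero {p q : ℕ} {M : Matrix (Fin p) (Fin p) ℂ} {N : Matrix (Fin q) (Fin q) ℂ}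
    {X : Matrix (Fin p) (Fin q) ℂ} (h : M * X = X * N)
    (hdisj : ∀ z ∈ spectrum ℂ N, z ∉ spectrum ℂ M) : X = 0 := by
  have h2 := aeval_comm_of_comm h N.charpoly
  rw [Matrix.aeval_self_charpoly, Matrix.mul_zero] at h2
  obtain ⟨u, hu⟩ := isUnit_aeval_charpoly_of_disjoint M N hdisj
  calc X = ((↑u⁻¹ : Matrix (Fin p) (Fin p) ℂ) * ↑u) * X := by rw [Units.inv_mul, Matrix.one_mul]
  _ = (↑u⁻¹ : Matrix (Fin p) (Fin p) ℂ) * (aeval M N.charpoly * X) := by rw [hu, Matrix.mul_assoc]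
  _ = 0 := by rw [h2, Matrix.mul_zero]

lemma neg_mem_spectrum_neg {n : ℕ} {A : Matrix (Fin n) (Fin n) ℂ} {z : ℂ}
    (hz : z ∈ spectrum ℂ (-A)) : -z ∈ spectrum ℂ A := by
  rw [spectrum.mem_iff] at hz ⊢
  intro hu
  apply hz
  have : algebraMap ℂ (Matrix (Fin n) (Fin n) ℂ) z - -A = -(algebraMap ℂ _ (-z) - A) := by
    rw [map_neg, neg_sub, sub_neg_eq_add, sub_neg_eq_add]; abel
  rw [this]
  exact hu.neg

/-- `b * A = A' * b` when `A, A'` are compatible square roots with right-half-plane spectra. -/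
lemma sqrt_comm {p q : ℕ} {b : Matrix (Fin p) (Fin q) ℂ} {c : Matrix (Fin q) (Fin p) ℂ}
    {A : Matrix (Fin q) (Fin q) ℂ} {A' : Matrix (Fin p) (Fin p) ℂ}
    (hA : A * A = 1 + c * b) (hA' : A' * A' = 1 + b * c)
    (hsA : ∀ z ∈ spectrum ℂ A, 0 < z.re) (hsA' : ∀ z ∈ spectrum ℂ A', 0 < z.re) :
    b * A = A' * b := by
  have key : A' * (A' * b - b * A) = (A' * b - b * A) * (-A) := by
    rw [Matrix.mul_sub, ← Matrix.mul_assoc, hA', Matrix.sub_mul]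
    rw [Matrix.mul_neg, Matrix.mul_neg, Matrix.mul_assoc, Matrix.mul_assoc, hA]
    rw [Matrix.add_mul, Matrix.one_mul, Matrix.mul_add, Matrix.mul_one, Matrix.mul_assoc]
    abel
  have h0 : A' * b - b * A = 0 := by
    apply sylvester_eq_zero key
    intro z hz hz'
    have h1 := hsA (-z) (neg_mem_spectrum_neg hz)
    have h2 := hsA' z hz'
    simp only [Complex.neg_re] at h1
    linarith
  rw [sub_eq_zero] at h0
  exact h0.symm

/-! ### Calculus helpers -/

section CalcHelpers
variable {E : Type*} [NormedAddCommGroup E] [NormedSpace ℂ E]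
attribute [-instance] instTopologicalSpaceMatrix Matrix.instUniformSpace

noncomputable def mulCLM (m n k : ℕ) :
    Matrix (Fin m) (Fin n) ℂ →L[ℂ] Matrix (Fin n) (Fin k) ℂ →L[ℂ] Matrix (Fin m) (Fin k) ℂ :=
  LinearMap.toContinuousLinearMap
  { toFun := fun A => LinearMap.toContinuousLinearMap
      { toFun := fun B => A * B
        map_add' := fun B C => Matrix.mul_add A B C
        map_smul' := fun r B => (Matrix.mul_smul A r B) }
    map_add' := by
      intro A B
      ext C i j
      simp [Matrix.add_mul]
    map_smul' := by
      intro r A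
      ext C i j
      simp [Matrix.smul_mul] }

@[simp] lemma mulCLM_apply {m n k : ℕ} (A : Matrix (Fin m) (Fin n) ℂ)
    (B : Matrix (Fin n) (Fin k) ℂ) : mulCLM m n k A B = A * B := rfl

lemma HasFDerivAt.matmul {m n k : ℕ} {f : E → Matrix (Fin m) (Fin n) ℂ}
    {g : E → Matrix (Fin n) (Fin k) ℂ} {f' : E →L[ℂ] Matrix (Fin m) (Fin n) ℂ}
    {g' : E →L[ℂ] Matrix (Fin n) (Fin k) ℂ} {x : E}
    (hf : HasFDerivAt f f' x) (hg : HasFDerivAt g g' x) :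
    HasFDerivAt (fun y => f y * g y)
      (((mulCLM m n k (f x)).comp g') + (((mulCLM m n k).flip (g x)).comp f')) x := by
  have hc : HasFDerivAt (fun y => mulCLM m n k (f y)) ((mulCLM m n k).comp f') x :=
    (mulCLM m n k).hasFDerivAt.comp x hf
  have h2 := hc.clm_apply hg
  exact h2

noncomputable def entryCLM (m n : ℕ) (i : Fin m) (j : Fin n) :
    Matrix (Fin m) (Fin n) ℂ →L[ℂ] ℂ :=
  LinearMap.toContinuousLinearMap
  { toFun := fun M => M i j
    map_add' := fun _ _ => rfl
    map_smul' := fun _ _ => rfl }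

lemma DifferentiableAt.matrix_entry {m n : ℕ} {f : E → Matrix (Fin m) (Fin n) ℂ} {x : E}
    (hf : DifferentiableAt ℂ f x) (i : Fin m) (j : Fin n) :
    DifferentiableAt ℂ (fun y => f y i j) x :=
  (entryCLM m n i j).differentiableAt.comp x hf

lemma DifferentiableAt.matrix_det {n : ℕ} {f : E → Matrix (Fin n) (Fin n) ℂ} {x : E}
    (hf : ∀ i j, DifferentiableAt ℂ (fun y => f y i j) x) :
    DifferentiableAt ℂ (fun y => (f y).det) x := by
  simp only [Matrix.det_apply']
  apply DifferentiableAt.fun_sum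
  intro σ _
  apply DifferentiableAt.const_mul
  have h := HasFDerivAt.finset_prod (u := (Finset.univ : Finset (Fin n)))
    (g := fun i y => f y (σ i) i)
    (g' := fun i => fderiv ℂ (fun y => f y (σ i) i) x)
    (fun i _ => (hf (σ i) i).hasFDerivAt)
  exact h.differentiableAt

lemma DifferentiableAt.matrix_adjugate {n : ℕ} {f : E → Matrix (Fin n) (Fin n) ℂ} {x : E}
    (hf : DifferentiableAt ℂ f x) :
    DifferentiableAt ℂ (fun y => (f y).adjugate) x := by
  refine differentiableAt_pi.2 fun i => ?_
  refine differentiableAt_pi.2 fun j => ?_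
  have : (fun y => (f y).adjugate i j) = fun y => ((f y).updateRow j (Pi.single i 1)).det := by
    funext y; rw [Matrix.adjugate_apply]
  rw [this]
  apply DifferentiableAt.matrix_det
  intro k l
  by_cases hk : k = j
  · subst hk
    simp only [Matrix.updateRow_self]
    exact differentiableAt_const _
  · simp only [Matrix.updateRow_ne hk]
    exact hf.matrix_entry k l

lemma DifferentiableAt.matrix_inv {n : ℕ} {f : E → Matrix (Fin n) (Fin n) ℂ} {x : E}
    (hf : DifferentiableAt ℂ f x) (hu : IsUnit (f x)) :
    DifferentiableAt ℂ (fun y => (f y)⁻¹) x := by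
  have : (fun y => (f y)⁻¹) = fun y => (Ring.inverse ((f y).det)) • (f y).adjugate := by
    funext y; rw [Matrix.inv_def]
  rw [this]
  have hdet : DifferentiableAt ℂ (fun y => (f y).det) x :=
    DifferentiableAt.matrix_det fun i j => hf.matrix_entry i j
  have hne : (f x).det ≠ 0 := ((Matrix.isUnit_iff_isUnit_det _).1 hu).ne_zero
  have hinv : DifferentiableAt ℂ (fun y => Ring.inverse ((f y).det)) x := by
    simp only [Ring.inverse_eq_inv']
    exact hdet.inv hne
  exact hinv.smul hf.matrix_adjugate

end CalcHelpers

/-! ### Trace algebra core -/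

lemma tcyc {m n : ℕ} (P : Matrix (Fin m) (Fin n) ℂ) (Q : Matrix (Fin n) (Fin m) ℂ) :
    (P*Q).trace = (Q*P).trace := Matrix.trace_mul_comm P Q

section Core
variable {p q : ℕ} (A' J : Matrix (Fin p) (Fin p) ℂ)
  (b v₁ w₁ : Matrix (Fin p) (Fin q) ℂ) (c v₂ w₂ : Matrix (Fin q) (Fin p) ℂ)
  (sv sw : Matrix (Fin p) (Fin p) ℂ)

lemma Texp (hJ1 : A' * J = 1) (hJ2 : J * A' = 1) (h2 : A' * A' = 1 + b * c) :
    ((A'*A') * (J*sv*(J*b) - J*v₁) * (1 + c*b) * (-(w₂*J) + c*(J*(sw*J)))).trace =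
      - (sv*(A'*(b*w₂))).trace + (sv*(A'*(A'*sw))).trace - (sv*sw).trace
      + (v₁*w₂).trace + (v₁*(c*(b*w₂))).trace - (v₁*(c*(A'*sw))).trace := by
  have hA'J : ∀ {k : ℕ} (X : Matrix (Fin p) (Fin k) ℂ), A'*(J*X) = X := by
    intro k X; rw [← Matrix.mul_assoc, hJ1, Matrix.one_mul]
  have hJA' : ∀ {k : ℕ} (X : Matrix (Fin p) (Fin k) ℂ), J*(A'*X) = X := by
    intro k X; rw [← Matrix.mul_assoc, hJ2, Matrix.one_mul]
  have hbcX : ∀ {k : ℕ} (X : Matrix (Fin p) (Fin k) ℂ), b*(c*X) = A'*(A'*X) - X := by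
    intro k X
    rw [← Matrix.mul_assoc, ← Matrix.mul_assoc]
    rw [h2, Matrix.add_mul, Matrix.one_mul]
    abel
  have key : (A'*A') * (J*sv*(J*b) - J*v₁) * (1 + c*b) * (-(w₂*J) + c*(J*(sw*J)))
      = -(A'*(sv*(A'*(b*(w₂*J))))) + (A'*(sv*(A'*(A'*(sw*J))))) - (A'*(sv*(sw*J)))
        + (A'*(v₁*(w₂*J))) + (A'*(v₁*(c*(b*(w₂*J))))) - (A'*(v₁*(c*(A'*(sw*J))))) := by
    simp only [Matrix.mul_add, Matrix.add_mul, Matrix.mul_sub, Matrix.sub_mul,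
      Matrix.mul_neg, Matrix.neg_mul, Matrix.mul_one, Matrix.one_mul, Matrix.mul_assoc,
      hA'J, hJA', hbcX]
    abel
  rw [key]
  simp only [Matrix.trace_add, Matrix.trace_sub, Matrix.trace_neg]
  have rot : ∀ (u : Matrix (Fin p) (Fin p) ℂ), (A'*u).trace = (u*A').trace :=
    fun u => tcyc A' u
  rw [rot (sv*(A'*(b*(w₂*J)))), rot (sv*(A'*(A'*(sw*J)))), rot (sv*(sw*J)),
      rot (v₁*(w₂*J)), rot (v₁*(c*(b*(w₂*J)))), rot (v₁*(c*(A'*(sw*J))))]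
  simp only [Matrix.mul_assoc, hJ2, Matrix.mul_one]

lemma core_trace (hJ1 : A' * J = 1) (hJ2 : J * A' = 1) (h2 : A' * A' = 1 + b * c)
    (hv : A' * sv + sv * A' = b * v₂ + v₁ * c)
    (hw : A' * sw + sw * A' = b * w₂ + w₁ * c) :
    ((A'*A') * (J*sv*(J*b) - J*v₁) * (1 + c*b) * (-(w₂*J) + c*(J*(sw*J)))).trace -
      ((A'*A') * (J*sw*(J*b) - J*w₁) * (1 + c*b) * (-(v₂*J) + c*(J*(sv*J)))).trace =
    (v₁*w₂).trace - (w₁*v₂).trace := by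
  rw [Texp A' J b v₁ c w₂ sv sw hJ1 hJ2 h2,
      Texp A' J b w₁ c v₂ sw sv hJ1 hJ2 h2]
  have F1 : (A'*(sv*(A'*sw))).trace + (sv*(A'*(A'*sw))).trace
      = (b*(v₂*(A'*sw))).trace + (v₁*(c*(A'*sw))).trace := by
    have h := congrArg (fun M => (M*(A'*sw)).trace) hv
    simpa only [Matrix.add_mul, Matrix.trace_add, Matrix.mul_assoc] using h
  have F2 : (A'*(sv*(b*w₂))).trace + (sv*(A'*(b*w₂))).trace
      = (b*(v₂*(b*w₂))).trace + (v₁*(c*(b*w₂))).trace := by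
    have h := congrArg (fun M => (M*(b*w₂)).trace) hv
    simpa only [Matrix.add_mul, Matrix.trace_add, Matrix.mul_assoc] using h
  have F3 : (A'*(sw*(A'*sv))).trace + (sw*(A'*(A'*sv))).trace
      = (b*(w₂*(A'*sv))).trace + (w₁*(c*(A'*sv))).trace := by
    have h := congrArg (fun M => (M*(A'*sv)).trace) hw
    simpa only [Matrix.add_mul, Matrix.trace_add, Matrix.mul_assoc] using h
  have F4 : (A'*(sw*(b*v₂))).trace + (sw*(A'*(b*v₂))).trace
      = (b*(w₂*(b*v₂))).trace + (w₁*(c*(b*v₂))).trace := by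
    have h := congrArg (fun M => (M*(b*v₂)).trace) hw
    simpa only [Matrix.add_mul, Matrix.trace_add, Matrix.mul_assoc] using h
  have c0 : (sv*sw).trace = (sw*sv).trace := tcyc sv sw
  have c1 : (A'*(sv*(A'*sw))).trace = (A'*(sw*(A'*sv))).trace := by
    rw [← Matrix.mul_assoc, tcyc]; simp only [Matrix.mul_assoc]
  have c2 : (b*(v₂*(A'*sw))).trace = (A'*(sw*(b*v₂))).trace := by
    rw [← Matrix.mul_assoc, tcyc]; simp only [Matrix.mul_assoc]
  have c3 : (A'*(sv*(b*w₂))).trace = (b*(w₂*(A'*sv))).trace := by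
    rw [← Matrix.mul_assoc, tcyc]; simp only [Matrix.mul_assoc]
  have c4 : (b*(v₂*(b*w₂))).trace = (b*(w₂*(b*v₂))).trace := by
    rw [← Matrix.mul_assoc, tcyc]; simp only [Matrix.mul_assoc]
  linear_combination F1 - F2 - F3 + F4 - c1 + c2 + c3 - c4 - c0
end Core


set_option maxHeartbeats 2000000 in
/-- Flatness of the invariant two-form in normal coordinates: under the
substitution `Z = -b(1+b̃b)^{-1/2}`, `Z̃ = -b̃(1+b b̃)^{-1/2}` (with the principal
square roots encoded as differentiable matrix functions `S`, `S'` squaring to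
`1 + b̃b` resp. `1 + b b̃` with spectra in the open right half-plane, on a
neighborhood of the point), the pullback of
`Tr((1-Z Z̃)⁻¹ dZ ∧ (1-Z̃Z)⁻¹ dZ̃)` equals the flat form `Tr(db ∧ db̃)`,
stated pointwise on a pair of tangent vectors `(v, w)`. -/
theorem pullback_two_form_flat {p q : ℕ}
    (x : Matrix (Fin p) (Fin q) ℂ × Matrix (Fin q) (Fin p) ℂ)
    (hspec : ∀ z ∈ spectrum ℂ (x.2 * x.1), ¬(z.im = 0 ∧ z.re ≤ -1))
    (S : Matrix (Fin p) (Fin q) ℂ × Matrix (Fin q) (Fin p) ℂ → Matrix (Fin q) (Fin q) ℂ)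
    (S' : Matrix (Fin p) (Fin q) ℂ × Matrix (Fin q) (Fin p) ℂ → Matrix (Fin p) (Fin p) ℂ)
    (hS : ∀ᶠ y in nhds x, S y * S y = 1 + y.2 * y.1 ∧ ∀ z ∈ spectrum ℂ (S y), 0 < z.re)
    (hS' : ∀ᶠ y in nhds x, S' y * S' y = 1 + y.1 * y.2 ∧ ∀ z ∈ spectrum ℂ (S' y), 0 < z.re)
    (hSd : DifferentiableAt ℂ S x) (hS'd : DifferentiableAt ℂ S' x)
    (v w : Matrix (Fin p) (Fin q) ℂ × Matrix (Fin q) (Fin p) ℂ) :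
    let R : Matrix (Fin p) (Fin q) ℂ × Matrix (Fin q) (Fin p) ℂ →
        Matrix (Fin p) (Fin q) ℂ × Matrix (Fin q) (Fin p) ℂ :=
      fun y => (-(y.1 * (S y)⁻¹), -(y.2 * (S' y)⁻¹))
    ((1 - (R x).1 * (R x).2)⁻¹ * (fderiv ℂ R x v).1 *
          (1 - (R x).2 * (R x).1)⁻¹ * (fderiv ℂ R x w).2).trace -
      ((1 - (R x).1 * (R x).2)⁻¹ * (fderiv ℂ R x w).1 *
          (1 - (R x).2 * (R x).1)⁻¹ * (fderiv ℂ R x v).2).trace =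
    (v.1 * w.2).trace - (w.1 * v.2).trace := by
  intro R
  obtain ⟨hA2, hAspec⟩ := hS.self_of_nhds
  obtain ⟨hA'2, hA'spec⟩ := hS'.self_of_nhds
  have hAu : IsUnit (S x) := by
    rw [← spectrum.zero_notMem_iff ℂ]
    intro h0
    simpa using hAspec 0 h0
  have hA'u : IsUnit (S' x) := by
    rw [← spectrum.zero_notMem_iff ℂ]
    intro h0
    simpa using hA'spec 0 h0
  have hAdet := (Matrix.isUnit_iff_isUnit_det _).1 hAu
  have hA'det := (Matrix.isUnit_iff_isUnit_det _).1 hA'u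
  set J : Matrix (Fin q) (Fin q) ℂ := (S x)⁻¹ with hJdef
  set J' : Matrix (Fin p) (Fin p) ℂ := (S' x)⁻¹ with hJ'def
  have hJ1 : S x * J = 1 := Matrix.mul_nonsing_inv _ hAdet
  have hJ2 : J * S x = 1 := Matrix.nonsing_inv_mul _ hAdet
  have hJ'1 : S' x * J' = 1 := Matrix.mul_nonsing_inv _ hA'det
  have hJ'2 : J' * S' x = 1 := Matrix.nonsing_inv_mul _ hA'det
  have hbA : x.1 * S x = S' x * x.1 := sqrt_comm hA2 hA'2 hAspec hA'spec
  have hcA : x.2 * S' x = S x * x.2 := sqrt_comm hA'2 hA2 hA'spec hAspec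
  have hbJ : x.1 * J = J' * x.1 := by
    calc x.1 * J = (J' * S' x) * (x.1 * J) := by rw [hJ'2, Matrix.one_mul]
    _ = J' * ((S' x * x.1) * J) := by simp only [Matrix.mul_assoc]
    _ = J' * ((x.1 * S x) * J) := by rw [hbA]
    _ = J' * (x.1 * (S x * J)) := by simp only [Matrix.mul_assoc]
    _ = J' * x.1 := by rw [hJ1, Matrix.mul_one]
  have hcJ' : x.2 * J' = J * x.2 := by
    calc x.2 * J' = (J * S x) * (x.2 * J') := by rw [hJ2, Matrix.one_mul]
    _ = J * ((S x * x.2) * J') := by simp only [Matrix.mul_assoc]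
    _ = J * ((x.2 * S' x) * J') := by rw [hcA]
    _ = J * (x.2 * (S' x * J')) := by simp only [Matrix.mul_assoc]
    _ = J * x.2 := by rw [hJ'1, Matrix.mul_one]
  -- eventual facts
  have hSu_ev : ∀ᶠ y in nhds x, IsUnit ((S y).det) := by
    filter_upwards [hS] with y hy
    apply (Matrix.isUnit_iff_isUnit_det _).1
    rw [← spectrum.zero_notMem_iff ℂ]
    intro h0
    simpa using hy.2 0 h0
  have hS'u_ev : ∀ᶠ y in nhds x, IsUnit ((S' y).det) := by
    filter_upwards [hS'] with y hy
    apply (Matrix.isUnit_iff_isUnit_det _).1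
    rw [← spectrum.zero_notMem_iff ℂ]
    intro h0
    simpa using hy.2 0 h0
  have hcomm_ev : (fun y => y.1 * S y) =ᶠ[nhds x] (fun y => S' y * y.1) := by
    filter_upwards [hS, hS'] with y hy hy'
    exact sqrt_comm hy.1 hy'.1 hy.2 hy'.2
  have hS'sq_ev : (fun y => S' y * S' y) =ᶠ[nhds x] (fun y => 1 + y.1 * y.2) := by
    filter_upwards [hS'] with y hy
    exact hy.1
  -- differentiability of inverses
  have hdiS : DifferentiableAt ℂ (fun y => (S y)⁻¹) x := hSd.matrix_inv hAu
  have hdiS' : DifferentiableAt ℂ (fun y => (S' y)⁻¹) x := hS'd.matrix_inv hA'u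
  -- derivative of the inverses
  have hdinvS : ∀ u, fderiv ℂ (fun y => (S y)⁻¹) x u = -(J * (fderiv ℂ S x u * J)) := by
    intro u
    have hinv_ev : (fun y => S y * (S y)⁻¹) =ᶠ[nhds x]
        (fun _ => (1 : Matrix (Fin q) (Fin q) ℂ)) := by
      filter_upwards [hSu_ev] with y hy
      exact Matrix.mul_nonsing_inv _ hy
    have hmul := hSd.hasFDerivAt.matmul hdiS.hasFDerivAt
    have hD0 := hmul.fderiv.symm.trans (hinv_ev.fderiv_eq.trans (fderiv_const_apply _))
    have happ := ContinuousLinearMap.ext_iff.1 hD0 u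
    simp only [ContinuousLinearMap.add_apply, ContinuousLinearMap.comp_apply,
      ContinuousLinearMap.flip_apply, mulCLM_apply, ContinuousLinearMap.zero_apply] at happ
    -- happ : S x * (fderiv inv x u) + (fderiv S x u) * J = 0  (note J := (S x)⁻¹)
    rw [← hJdef] at happ
    have e1 : S x * (fderiv ℂ (fun y => (S y)⁻¹) x u) = -(fderiv ℂ S x u * J) :=
      eq_neg_of_add_eq_zero_left happ
    calc fderiv ℂ (fun y => (S y)⁻¹) x u
        = (J * S x) * fderiv ℂ (fun y => (S y)⁻¹) x u := by rw [hJ2, Matrix.one_mul]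
      _ = J * (S x * fderiv ℂ (fun y => (S y)⁻¹) x u) := by rw [Matrix.mul_assoc]
      _ = J * (-(fderiv ℂ S x u * J)) := by rw [e1]
      _ = -(J * (fderiv ℂ S x u * J)) := by rw [Matrix.mul_neg]
  have hdinvS' : ∀ u, fderiv ℂ (fun y => (S' y)⁻¹) x u = -(J' * (fderiv ℂ S' x u * J')) := by
    intro u
    have hinv_ev : (fun y => S' y * (S' y)⁻¹) =ᶠ[nhds x]
        (fun _ => (1 : Matrix (Fin p) (Fin p) ℂ)) := by
      filter_upwards [hS'u_ev] with y hy
      exact Matrix.mul_nonsing_inv _ hy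
    have hmul := hS'd.hasFDerivAt.matmul hdiS'.hasFDerivAt
    have hD0 := hmul.fderiv.symm.trans (hinv_ev.fderiv_eq.trans (fderiv_const_apply _))
    have happ := ContinuousLinearMap.ext_iff.1 hD0 u
    simp only [ContinuousLinearMap.add_apply, ContinuousLinearMap.comp_apply,
      ContinuousLinearMap.flip_apply, mulCLM_apply, ContinuousLinearMap.zero_apply] at happ
    rw [← hJ'def] at happ
    have e1 : S' x * (fderiv ℂ (fun y => (S' y)⁻¹) x u) = -(fderiv ℂ S' x u * J') :=
      eq_neg_of_add_eq_zero_left happ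
    calc fderiv ℂ (fun y => (S' y)⁻¹) x u
        = (J' * S' x) * fderiv ℂ (fun y => (S' y)⁻¹) x u := by rw [hJ'2, Matrix.one_mul]
      _ = J' * (S' x * fderiv ℂ (fun y => (S' y)⁻¹) x u) := by rw [Matrix.mul_assoc]
      _ = J' * (-(fderiv ℂ S' x u * J')) := by rw [e1]
      _ = -(J' * (fderiv ℂ S' x u * J')) := by rw [Matrix.mul_neg]
  -- cross relation
  have hcross : ∀ u : Matrix (Fin p) (Fin q) ℂ × Matrix (Fin q) (Fin p) ℂ,
      u.1 * S x + x.1 * fderiv ℂ S x u = S' x * u.1 + fderiv ℂ S' x u * x.1 := by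
    intro u
    have hl := (hasFDerivAt_fst.matmul hSd.hasFDerivAt).fderiv
    have hr := (hS'd.hasFDerivAt.matmul hasFDerivAt_fst).fderiv
    have heq := hl.symm.trans (hcomm_ev.fderiv_eq.trans hr)
    have happ := ContinuousLinearMap.ext_iff.1 heq u
    simp only [ContinuousLinearMap.add_apply, ContinuousLinearMap.comp_apply,
      ContinuousLinearMap.flip_apply, mulCLM_apply, ContinuousLinearMap.coe_fst'] at happ
    replace happ : x.1 * fderiv ℂ S x u + u.1 * S x = S' x * u.1 + fderiv ℂ S' x u * x.1 := happ
    -- happ : x.1 * (fderiv S x u) + u.1 * S x = S' x * u.1 + (fderiv S' x u) * x.1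
    linear_combination (norm := abel) happ
  -- square relation for S'
  have hrel' : ∀ u : Matrix (Fin p) (Fin q) ℂ × Matrix (Fin q) (Fin p) ℂ,
      S' x * fderiv ℂ S' x u + fderiv ℂ S' x u * S' x = x.1 * u.2 + u.1 * x.2 := by
    intro u
    have hl := (hS'd.hasFDerivAt.matmul hS'd.hasFDerivAt).fderiv
    have hprod : HasFDerivAt (fun y : Matrix (Fin p) (Fin q) ℂ × Matrix (Fin q) (Fin p) ℂ =>
        y.1 * y.2) _ x := hasFDerivAt_fst.matmul hasFDerivAt_snd
    have hr := (hprod.const_add (1 : Matrix (Fin p) (Fin p) ℂ)).fderiv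
    have heq := hl.symm.trans (hS'sq_ev.fderiv_eq.trans hr)
    have happ := ContinuousLinearMap.ext_iff.1 heq u
    simp only [ContinuousLinearMap.add_apply, ContinuousLinearMap.comp_apply,
      ContinuousLinearMap.flip_apply, mulCLM_apply, ContinuousLinearMap.coe_fst',
      ContinuousLinearMap.coe_snd'] at happ
    replace happ : S' x * fderiv ℂ S' x u + fderiv ℂ S' x u * S' x = x.1 * u.2 + u.1 * x.2 := happ
    linear_combination (norm := abel) happ
  -- derivative of R
  have hR : HasFDerivAt (fun y : Matrix (Fin p) (Fin q) ℂ × Matrix (Fin q) (Fin p) ℂ =>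
      (-(y.1 * (S y)⁻¹), -(y.2 * (S' y)⁻¹))) _ x :=
    HasFDerivAt.prodMk ((hasFDerivAt_fst.matmul hdiS.hasFDerivAt).neg)
      ((hasFDerivAt_snd.matmul hdiS'.hasFDerivAt).neg)
  have hReq : R = fun y => (-(y.1 * (S y)⁻¹), -(y.2 * (S' y)⁻¹)) := rfl
  have hfd1 : ∀ u, (fderiv ℂ R x u).1 = J' * fderiv ℂ S' x u * (J' * x.1) - J' * u.1 := by
    intro u
    rw [hReq, hR.fderiv]
    change -(x.1 * fderiv ℂ (fun y => (S y)⁻¹) x u + u.1 * J) = J' * fderiv ℂ S' x u * (J' * x.1) - J' * u.1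
    -- goal : -(x.1 * fderiv inv u + u.1 * J) = J' * σ' u * (J' * x.1) - J' * u.1
    rw [hdinvS u]
    have e1 : x.1 * -(J * (fderiv ℂ S x u * J)) = -(x.1 * J * (fderiv ℂ S x u * J)) := by
      rw [Matrix.mul_neg, Matrix.mul_assoc]
    rw [e1, hbJ]
    have e2 : J' * x.1 * (fderiv ℂ S x u * J) = J' * (x.1 * fderiv ℂ S x u * J) := by
      simp only [Matrix.mul_assoc]
    rw [e2]
    have e3 : x.1 * fderiv ℂ S x u = S' x * u.1 + fderiv ℂ S' x u * x.1 - u.1 * S x := by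
      rw [← hcross u]; abel
    rw [e3]
    have hJ'S' : ∀ (X : Matrix (Fin p) (Fin q) ℂ), J' * (S' x * X) = X := by
      intro X; rw [← Matrix.mul_assoc, hJ'2, Matrix.one_mul]
    simp only [Matrix.sub_mul, Matrix.add_mul, Matrix.mul_sub, Matrix.mul_add,
      Matrix.mul_assoc, hJ1, Matrix.mul_one, hbJ, hJ'S']
    abel
  have hfd2 : ∀ u, (fderiv ℂ R x u).2
      = -(u.2 * J') + x.2 * (J' * (fderiv ℂ S' x u * J')) := by
    intro u
    rw [hReq, hR.fderiv]
    change -(x.2 * fderiv ℂ (fun y => (S' y)⁻¹) x u + u.2 * J') = -(u.2 * J') + x.2 * (J' * (fderiv ℂ S' x u * J'))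
    rw [hdinvS' u]
    rw [Matrix.mul_neg]
    abel
  -- the two inverse factors
  have hbc : x.1 * x.2 = S' x * S' x - 1 := by rw [hA'2]; abel
  have hcb : x.2 * x.1 = S x * S x - 1 := by rw [hA2]; abel
  have hRx1 : (R x).1 = -(x.1 * J) := rfl
  have hRx2 : (R x).2 = -(x.2 * J') := rfl
  have hZ1 : (1 - (R x).1 * (R x).2)⁻¹ = S' x * S' x := by
    rw [hRx1, hRx2]
    have e : (1 : Matrix (Fin p) (Fin p) ℂ) - -(x.1 * J) * -(x.2 * J') = J' * J' := by
      have e1 : -(x.1 * J) * -(x.2 * J') = J' * ((x.1 * x.2) * J') := by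
        rw [Matrix.neg_mul, Matrix.mul_neg, neg_neg, hbJ]
        simp only [Matrix.mul_assoc]
      rw [e1, hbc]
      simp only [Matrix.sub_mul, Matrix.one_mul, Matrix.mul_assoc, hJ'1, Matrix.mul_one,
        Matrix.mul_sub, hJ'2]
      abel
    rw [e, Matrix.mul_inv_rev, Matrix.nonsing_inv_nonsing_inv _ hA'det]
  have hZ2 : (1 - (R x).2 * (R x).1)⁻¹ = 1 + x.2 * x.1 := by
    rw [hRx2, hRx1]
    have e : (1 : Matrix (Fin q) (Fin q) ℂ) - -(x.2 * J') * -(x.1 * J) = J * J := by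
      have e1 : -(x.2 * J') * -(x.1 * J) = J * ((x.2 * x.1) * J) := by
        rw [Matrix.neg_mul, Matrix.mul_neg, neg_neg, hcJ']
        simp only [Matrix.mul_assoc]
      rw [e1, hcb]
      simp only [Matrix.sub_mul, Matrix.one_mul, Matrix.mul_assoc, hJ1, Matrix.mul_one,
        Matrix.mul_sub, hJ2]
      abel
    rw [e, Matrix.mul_inv_rev, Matrix.nonsing_inv_nonsing_inv _ hAdet, hA2]
  rw [hZ1, hZ2, hfd1 v, hfd1 w, hfd2 v, hfd2 w]
  exact core_trace (S' x) J' x.1 v.1 w.1 x.2 v.2 w.2 (fderiv ℂ S' x v) (fderiv ℂ S' x w)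
    hJ'1 hJ'2 hA'2 (hrel' v) (hrel' w)
end
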